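/- Let k be a positive integer with k ≢ 0 (mod 3), and write k = 3q + ε with ε ∈ {−1, 1}, q ∈ ℕ. Then the map (x,y) ↦ (εkx, ε(ky+q)) is an injection from the set of integer solutions of 3x² + 3y² + 3xy + x + 2y = n into the set of integer solutions of 3x² + 3y² + 3xy + x + 2y = k²n + (k²−1)/3. -/
import Mathlib


/-- Let `k` be a positive integer with `k ≢ 0 (mod 3)`, written
`k = 3q + ε` with `ε ∈ {-1, 1}` and `q ≥ 0`, and let `m = (k² - 1)/3`. Then
`(x, y) ↦ (ε*k*x, ε*(k*y + q))` is an injection from the integer solutions of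
`3x² + 3y² + 3xy + x + 2y = n` into those of
`3x² + 3y² + 3xy + x + 2y = k²*n + (k² - 1)/3`. -/
theorem threecore_injection (k q ε n m : ℤ) (hk : 0 < k)
    (hε : ε = 1 ∨ ε = -1) (hq : 0 ≤ q) (hkq : k = 3 * q + ε)
    (hm : 3 * m = k ^ 2 - 1) :
    Set.InjOn (fun p : ℤ × ℤ => (ε * k * p.1, ε * (k * p.2 + q)))
      {p : ℤ × ℤ | 3 * p.1 ^ 2 + 3 * p.2 ^ 2 + 3 * p.1 * p.2 + p.1 + 2 * p.2 = n}
    ∧ Set.MapsTo (fun p : ℤ × ℤ => (ε * k * p.1, ε * (k * p.2 + q)))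
      {p : ℤ × ℤ | 3 * p.1 ^ 2 + 3 * p.2 ^ 2 + 3 * p.1 * p.2 + p.1 + 2 * p.2 = n}
      {p : ℤ × ℤ | 3 * p.1 ^ 2 + 3 * p.2 ^ 2 + 3 * p.1 * p.2 + p.1 + 2 * p.2
        = k ^ 2 * n + m} := by
  have hk0 : k ≠ 0 := by omega
  rcases hε with h | h <;> subst h <;> subst hkq
  · have hm2 : m = 3 * q ^ 2 + 2 * q := by nlinarith [hm]
    subst hm2
    constructor
    · intro a _ b _ hab
      simp only [Prod.mk.injEq, one_mul] at hab
      obtain ⟨h1, h2⟩ := hab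
      have hx : a.1 = b.1 := mul_left_cancel₀ hk0 h1
      have hy : a.2 = b.2 := mul_left_cancel₀ hk0 (by linarith)
      exact Prod.ext hx hy
    · intro a ha
      simp only [Set.mem_setOf_eq, one_mul] at ha ⊢
      linear_combination (3 * q + 1) ^ 2 * ha
  · have hm2 : m = 3 * q ^ 2 - 2 * q := by nlinarith [hm]
    subst hm2
    constructor
    · intro a _ b _ hab
      simp only [Prod.mk.injEq, neg_one_mul, neg_mul, neg_inj] at hab
      obtain ⟨h1, h2⟩ := hab
      have hx : a.1 = b.1 := mul_left_cancel₀ hk0 (by linarith)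
      have hy : a.2 = b.2 := mul_left_cancel₀ hk0 (by linarith)
      exact Prod.ext hx hy
    · intro a ha
      simp only [Set.mem_setOf_eq, neg_one_mul] at ha ⊢
      linear_combination (3 * q - 1) ^ 2 * ha
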